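/- Let E be a finite directed graph whose vertices all lie in one strongly connected component which is not a single cycle (i.e., some vertex supports two distinct return paths). Then by a finite sequence of legal column additions on B_E = A_E − I (each adding column u to column v where there is an edge from u to v, or where u supports a loop) one obtains a graph E' on the same vertex set such that every vertex of E' supports at least two loops and for every ordered pair of vertices (u,v) there is at least one edge from u to v; moreover each intermediate graph remains strongly connected. -/

import Mathlib

open Relation Matrix

namespace Stmt14

variable {V : Type} [Fintype V] [DecidableEq V]

/-- chains with exactly `n` edges -/
def ch (R : V → V → Prop) : ℕ → V → V → Prop
  | 0 => Eq
  | n+1 => fun a b => ∃ c, R a c ∧ ch R n c b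

theorem ch_mono {R S : V → V → Prop} (h : ∀ x y, R x y → S x y) :
    ∀ n a b, ch R n a b → ch S n a b := by
  intro n
  induction n with
  | zero => intro a b hab; exact hab
  | succ n ih => rintro a b ⟨c, hac, hcb⟩; exact ⟨c, h _ _ hac, ih _ _ hcb⟩

theorem ch_snoc_intro {R : V → V → Prop} :
    ∀ n a p b, ch R n a p → R p b → ch R (n+1) a b := by
  intro n
  induction n with
  | zero => intro a p b hap hpb; cases hap; exact ⟨b, hpb, rfl⟩
  | succ n ih => rintro a p b ⟨c, hac, hcp⟩ hpb; exact ⟨c, hac, ih _ _ _ hcp hpb⟩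

theorem ch_snoc_elim {R : V → V → Prop} :
    ∀ n a b, ch R (n+1) a b → ∃ p, ch R n a p ∧ R p b := by
  intro n
  induction n with
  | zero => rintro a b ⟨c, hac, hcb⟩; cases hcb; exact ⟨a, rfl, hac⟩
  | succ n ih =>
      rintro a b ⟨c, hac, hcb⟩
      obtain ⟨p, hcp, hpb⟩ := ih _ _ hcb
      exact ⟨p, ⟨c, hac, hcp⟩, hpb⟩

theorem reflTransGen_ch {R : V → V → Prop} {a b : V} (h : ReflTransGen R a b) :
    ∃ n, ch R n a b := by
  induction h with
  | refl => exact ⟨0, rfl⟩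
  | tail _ hbc ih => obtain ⟨n, hn⟩ := ih; exact ⟨n+1, ch_snoc_intro n _ _ _ hn hbc⟩

theorem ch_split {R : V → V → Prop} (b : V) :
    ∀ n a d, ch R n a d → (∃ j, j ≤ n ∧ ch R j a b) ∨ ch (fun x y => R x y ∧ x ≠ b) n a d := by
  intro n
  induction n with
  | zero => intro a d h; exact Or.inr h
  | succ n ih =>
      rintro a d ⟨c, hac, hcd⟩
      by_cases hab : a = b
      · exact Or.inl ⟨0, Nat.zero_le _, hab⟩
      · rcases ih c d hcd with ⟨j, hj, hch⟩ | hch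
        · exact Or.inl ⟨j+1, Nat.succ_le_succ hj, ⟨c, hac, hch⟩⟩
        · exact Or.inr ⟨c, ⟨hac, hab⟩, hch⟩

theorem transGen_head {R : V → V → Prop} {a b : V} (h : TransGen R a b) :
    ∃ c, R a c ∧ ReflTransGen R c b := by
  induction h with
  | single h => exact ⟨_, h, .refl⟩
  | tail _ h ih => obtain ⟨c, hc, hcb⟩ := ih; exact ⟨c, hc, hcb.tail h⟩

theorem transGen_flatten {R : V → V → Prop} {a b : V}
    (h : TransGen (TransGen R) a b) : TransGen R a b := by
  induction h with
  | single h => exact h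
  | tail _ h ih => exact ih.trans h

/-- the column-addition move -/
def mv (X : Matrix V V ℤ) (u v : V) : Matrix V V ℤ :=
  Matrix.of fun x y => if y = v then X x v + X x u - (if x = u then 1 else 0) else X x y

def R (X : Matrix V V ℤ) : V → V → Prop := fun x y => 0 < X x y

def Good (X : Matrix V V ℤ) : Prop :=
  (∀ i j, 0 ≤ X i j) ∧ (∀ i j : V, TransGen (R X) i j)

def Rel (X Y : Matrix V V ℤ) : Prop :=
  (∃ u v : V, u ≠ v ∧ (0 < X u v ∨ 0 < X u u) ∧
    Y = Matrix.of fun x y =>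
      if y = v then X x v + X x u - (if x = u then 1 else 0) else X x y) ∧
  (∀ i j, 0 ≤ Y i j) ∧
  (∀ i j : V, TransGen (fun x y => 0 < Y x y) i j)

theorem mv_apply_v (X : Matrix V V ℤ) (u v x : V) :
    mv X u v x v = X x v + X x u - (if x = u then 1 else 0) := by simp [mv]

theorem mv_apply_ne (X : Matrix V V ℤ) (u : V) {v y : V} (x : V) (h : y ≠ v) :
    mv X u v x y = X x y := by simp [mv, h]

theorem mv_nonneg {X : Matrix V V ℤ} {u v : V} (hX : ∀ i j, 0 ≤ X i j)
    (hleg : 0 < X u v ∨ 0 < X u u) : ∀ i j, 0 ≤ mv X u v i j := by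
  intro i j
  by_cases hj : j = v
  · rw [hj, mv_apply_v]
    by_cases hi : i = u
    · rw [if_pos hi, hi]
      rcases hleg with h | h
      · have := hX u u; omega
      · have := hX u v; omega
    · rw [if_neg hi]
      have := hX i v; have := hX i u; omega
  · rw [mv_apply_ne _ _ _ hj]; exact hX i j

theorem mv_mono {X : Matrix V V ℤ} {u v : V} (hX : ∀ i j, 0 ≤ X i j)
    (huu : 1 ≤ X u u) : ∀ i j, X i j ≤ mv X u v i j := by
  intro i j
  by_cases hj : j = v
  · rw [hj, mv_apply_v]
    by_cases hi : i = u
    · rw [if_pos hi, hi]; have := hX u v; have := hX u u; omega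
    · rw [if_neg hi]; have := hX i u; omega
  · rw [mv_apply_ne _ _ _ hj]

theorem sc_of_mono {X Y : Matrix V V ℤ} (h : ∀ i j, X i j ≤ Y i j)
    (hsc : ∀ i j : V, TransGen (R X) i j) : ∀ i j : V, TransGen (R Y) i j :=
  fun i j => TransGen.mono (fun a b hab => lt_of_lt_of_le hab (h a b)) _ _ (hsc i j)

/-- the key strong-connectivity preservation lemma -/
theorem sc_mv {X : Matrix V V ℤ} {u v : V} (hX : ∀ i j, 0 ≤ X i j) (huv : u ≠ v)
    (hleg : 0 < X u v ∨ 0 < X u u)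
    (hsc : ∀ i j : V, TransGen (R X) i j)
    (hout : (∃ w, w ≠ v ∧ 0 < X u w) ∨ 0 < mv X u v u v) :
    ∀ i j : V, TransGen (R (mv X u v)) i j := by
  have f1 : ∀ x y, R X x y → ¬(x = u ∧ y = v) → R (mv X u v) x y := by
    intro x y hxy hne
    by_cases hyv : y = v
    · have hxu : x ≠ u := fun h => hne ⟨h, hyv⟩
      show 0 < mv X u v x y
      rw [hyv, mv_apply_v, if_neg hxu]
      have := hX x u
      have hxy' : 0 < X x v := hyv ▸ hxy
      omega
    · show 0 < mv X u v x y
      rw [mv_apply_ne _ _ _ hyv]; exact hxy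
  by_cases hm : ∀ x y, R X x y → R (mv X u v) x y
  · exact fun i j => TransGen.mono hm _ _ (hsc i j)
  · push_neg at hm
    obtain ⟨x0, y0, hx0, hy0⟩ := hm
    have hxy0 : x0 = u ∧ y0 = v := by
      by_contra h; exact hy0 (f1 _ _ hx0 h)
    -- bad case: there is an edge u → v which dies
    have huv1 : 0 < X u v := by rw [← hxy0.1, ← hxy0.2]; exact hx0
    have hYuv : ¬ 0 < mv X u v u v := by
      intro h
      apply hy0
      show 0 < mv X u v x0 y0
      rw [hxy0.1, hxy0.2]; exact h
    rcases hout with ⟨w, hwv, huw⟩ | hpos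
    swap
    · exact absurd hpos hYuv
    have huu : X u u = 0 := by
      have := mv_apply_v X u v u
      rw [if_pos rfl] at this
      have := hX u u
      omega
    have hwu : w ≠ u := fun h => by rw [h] at huw; omega
    have hRuw : R (mv X u v) u w := by
      show 0 < mv X u v u w
      rw [mv_apply_ne _ _ _ hwv]; exact huw
    have f2 : ∀ x, x ≠ u → 0 < X x u → R (mv X u v) x v := by
      intro x hxu hxXu
      show 0 < mv X u v x v
      rw [mv_apply_v, if_neg hxu]
      have := hX x v; omega
    have L : ∀ x y, TransGen (R X) x y →
        TransGen (R (mv X u v)) x y ∨ TransGen (R (mv X u v)) x v ∨ x = u := by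
      intro x y h
      induction h using Relation.TransGen.head_induction_on with
      | single h =>
          rename_i a
          by_cases hb : a = u
          · exact Or.inr (Or.inr hb)
          · exact Or.inl (.single (f1 _ _ h (fun hc => hb hc.1)))
      | head h' htg ihp =>
          rename_i x' c'
          by_cases hxu : x' = u
          · exact Or.inr (Or.inr hxu)
          · rcases ihp with t | t | hcu
            · have he : R (mv X u v) x' c' := f1 _ _ h' (fun hc => hxu hc.1)
              exact Or.inl (t.head he)
            · have he : R (mv X u v) x' c' := f1 _ _ h' (fun hc => hxu hc.1)
              exact Or.inr (Or.inl (t.head he))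
            · subst hcu
              exact Or.inr (Or.inl (.single (f2 _ hxu h')))
    have key : TransGen (R (mv X u v)) u v := by
      rcases L w v (hsc w v) with t | t | h
      · exact t.head hRuw
      · exact t.head hRuw
      · exact absurd h hwu
    have lift : ∀ x y, R X x y → TransGen (R (mv X u v)) x y := by
      intro x y h
      by_cases hb : x = u ∧ y = v
      · obtain ⟨rfl, rfl⟩ := hb; exact key
      · exact .single (f1 _ _ h hb)
    intro i j
    exact transGen_flatten (TransGen.mono lift _ _ (hsc i j))

theorem outdeg_pos {X : Matrix V V ℤ} (hX : ∀ i j, 0 ≤ X i j)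
    (hsc : ∀ i j : V, TransGen (R X) i j) (p : V) : 1 ≤ ∑ y, X p y := by
  obtain ⟨z, hz, _⟩ := transGen_head (hsc p p)
  have h1 : X p z ≤ ∑ y, X p y :=
    Finset.single_le_sum (fun y _ => hX p y) (Finset.mem_univ z)
  have : 0 < X p z := hz
  omega

/-- Phase 1: produce a loop somewhere -/
theorem phase1 : ∀ m : ℕ, ∀ X : Matrix V V ℤ, ∀ b c : V,
    Good X → 2 ≤ ∑ y, X b y → 0 < X b c → ch (R X) m c b →
    ∃ Y, ReflTransGen Rel X Y ∧ Good Y ∧ ∃ w, 0 < Y w w := by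
  intro m
  induction m using Nat.strong_induction_on with
  | _ m IH =>
  intro X b c hg hdeg hbc hch
  obtain ⟨hX, hsc⟩ := hg
  by_cases hbb : 0 < X b b
  · exact ⟨X, .refl, ⟨hX, hsc⟩, b, hbb⟩
  by_cases hcb : c = b
  · exact ⟨X, .refl, ⟨hX, hsc⟩, b, by rwa [hcb] at hbc⟩
  have hbc' : b ≠ c := fun h => hcb h.symm
  have hleg : 0 < X b c ∨ 0 < X b b := Or.inl hbc
  have hout : (∃ w, w ≠ c ∧ 0 < X b w) ∨ 0 < mv X b c b c := by
    by_cases h2 : 2 ≤ X b c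
    · right; rw [mv_apply_v, if_pos rfl]; have := hX b b; omega
    · left
      by_contra hno
      push_neg at hno
      have hz : ∀ w, w ≠ c → X b w = 0 := fun w hw => le_antisymm (hno w hw) (hX b w)
      have hs : (∑ y, X b y) = X b c :=
        Finset.sum_eq_single c (fun w _ hw => hz w hw) (by simp)
      omega
  have hnn := mv_nonneg hX hleg
  have hsc' := sc_mv hX hbc' hleg hsc hout
  have hrel : Rel X (mv X b c) := ⟨⟨b, c, hbc', hleg, rfl⟩, hnn, hsc'⟩
  by_cases hloopc : 0 < X c b
  · refine ⟨mv X b c, .single hrel, ⟨hnn, hsc'⟩, c, ?_⟩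
    rw [mv_apply_v, if_neg hcb]
    have := hX c c; omega
  have hm0 : m ≠ 0 := by rintro rfl; exact hcb hch
  obtain ⟨m', rfl⟩ := Nat.exists_eq_succ_of_ne_zero hm0
  · obtain ⟨p, hcp, hpb⟩ := ch_snoc_elim m' c b hch
    by_cases hpbq : p = b
    · rw [hpbq] at hcp
      exact IH m' (Nat.lt_succ_self m') X b c ⟨hX, hsc⟩ hdeg hbc hcp
    rcases ch_split b m' c p hcp with ⟨j, hj, hch'⟩ | hch'
    · exact IH j (by omega) X b c ⟨hX, hsc⟩ hdeg hbc hch'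
    · have hpb' : 0 < X p b := hpb
      have hYpc : 0 < mv X b c p c := by
        rw [mv_apply_v, if_neg hpbq]; have := hX p c; omega
      have hdegp : 2 ≤ ∑ y, mv X b c p y := by
        have h1 : ∀ y, mv X b c p y = X p y + (if y = c then X p b else 0) := by
          intro y
          by_cases hyc : y = c
          · rw [hyc, mv_apply_v, if_neg hpbq, if_pos rfl]; ring
          · rw [mv_apply_ne _ _ _ hyc, if_neg hyc]; ring
        rw [Finset.sum_congr rfl (fun y _ => h1 y), Finset.sum_add_distrib]
        have h2 : (∑ y, if y = c then X p b else 0) = X p b := by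
          simp
        rw [h2]
        have := outdeg_pos hX hsc p
        omega
      have hchY : ch (R (mv X b c)) m' c p := by
        refine ch_mono ?_ m' c p hch'
        rintro x y ⟨hxy, hxb⟩
        by_cases hyc : y = c
        · show 0 < mv X b c x y
          rw [hyc, mv_apply_v, if_neg hxb]
          have := hX x b
          have h3 : 0 < X x c := hyc ▸ hxy
          omega
        · show 0 < mv X b c x y
          rw [mv_apply_ne _ _ _ hyc]; exact hxy
      obtain ⟨Z, hsteps, hgZ, w, hw⟩ :=
        IH m' (Nat.lt_succ_self m') (mv X b c) p c ⟨hnn, hsc'⟩ hdegp hYpc hchY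
      exact ⟨Z, .head hrel hsteps, hgZ, w, hw⟩

/-- Phase 2a: propagate a loop backwards along a path -/
theorem phase2a (X : Matrix V V ℤ) (w : V) (hg : Good X) (hw : 0 < X w w) :
    ∀ m : ℕ, ∀ x : V, ch (R X) m x w →
    ∃ Y, ReflTransGen Rel X Y ∧ Good Y ∧ (∀ i j, X i j ≤ Y i j) ∧ 0 < Y x x := by
  intro m
  induction m with
  | zero =>
      intro x hx
      cases hx
      exact ⟨X, .refl, hg, fun _ _ => le_rfl, hw⟩
  | succ m ih =>
      rintro x ⟨d, hxd, hch⟩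
      obtain ⟨Y, hsteps, hgY, hmono, hd⟩ := ih d hch
      by_cases hxdq : x = d
      · subst hxdq; exact ⟨Y, hsteps, hgY, hmono, hd⟩
      obtain ⟨hYn, hYsc⟩ := hgY
      have hdx : d ≠ x := fun h => hxdq h.symm
      have hleg : 0 < Y d x ∨ 0 < Y d d := Or.inr hd
      have hm := mv_mono hYn (u := d) (v := x) (by omega)
      have hnn : ∀ i j, 0 ≤ mv Y d x i j := fun i j => le_trans (hYn i j) (hm i j)
      have hsc' := sc_of_mono hm hYsc
      have hrel : Rel Y (mv Y d x) := ⟨⟨d, x, hdx, hleg, rfl⟩, hnn, hsc'⟩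
      refine ⟨mv Y d x, hsteps.tail hrel, ⟨hnn, hsc'⟩, fun i j => le_trans (hmono i j) (hm i j), ?_⟩
      rw [mv_apply_v, if_neg hxdq]
      have h1 : 0 < X x d := hxd
      have h2 := hmono x d
      have := hYn x x
      omega

/-- Phase 2: all vertices get loops -/
theorem phase2 (X : Matrix V V ℤ) (w : V) (hg : Good X) (hw : 0 < X w w) :
    ∃ Y, ReflTransGen Rel X Y ∧ Good Y ∧ ∀ x : V, 0 < Y x x := by
  suffices h : ∀ s : Finset V, ∃ Y, ReflTransGen Rel X Y ∧ Good Y ∧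
      (∀ i j, X i j ≤ Y i j) ∧ ∀ x ∈ s, 0 < Y x x by
    obtain ⟨Y, h1, h2, _, h4⟩ := h Finset.univ
    exact ⟨Y, h1, h2, fun x => h4 x (Finset.mem_univ x)⟩
  intro s
  induction s using Finset.induction_on with
  | empty => exact ⟨X, .refl, hg, fun _ _ => le_rfl, by simp⟩
  | @insert a s ha ih =>
      obtain ⟨Y, hsteps, hgY, hmono, hloops⟩ := ih
      have hwY : 0 < Y w w := lt_of_lt_of_le hw (hmono w w)
      obtain ⟨m, hm⟩ := reflTransGen_ch (hgY.2 a w).to_reflTransGen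
      obtain ⟨Z, hsteps', hgZ, hmono', hZa⟩ := phase2a Y w hgY hwY m a hm
      refine ⟨Z, hsteps.trans hsteps', hgZ, fun i j => le_trans (hmono i j) (hmono' i j), ?_⟩
      intro x hx
      rcases Finset.mem_insert.mp hx with rfl | hx
      · exact hZa
      · exact lt_of_lt_of_le (hloops x hx) (hmono' x x)

/-- Phase 3a: realize one positive entry -/
theorem phase3a (X : Matrix V V ℤ) (hg : Good X) (hd : ∀ i, 0 < X i i) :
    ∀ a v : V, TransGen (R X) a v →
    ∃ Y, ReflTransGen Rel X Y ∧ Good Y ∧ (∀ i j, X i j ≤ Y i j) ∧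
      (∀ i, 0 < Y i i) ∧ 0 < Y a v := by
  intro a v h
  induction h with
  | single h => exact ⟨X, .refl, hg, fun _ _ => le_rfl, hd, h⟩
  | @tail p v htg hpv ih =>
      obtain ⟨Y, hsteps, hgY, hmono, hdY, hYap⟩ := ih
      obtain ⟨hYn, hYsc⟩ := hgY
      have hYpv : 0 < Y p v := lt_of_lt_of_le hpv (hmono p v)
      by_cases hpvq : p = v
      · subst hpvq
        exact ⟨Y, hsteps, ⟨hYn, hYsc⟩, hmono, hdY, hYap⟩
      have hleg : 0 < Y p v ∨ 0 < Y p p := Or.inl hYpv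
      have hm := mv_mono hYn (u := p) (v := v) (by have := hdY p; omega)
      have hnn : ∀ i j, 0 ≤ mv Y p v i j := fun i j => le_trans (hYn i j) (hm i j)
      have hsc' := sc_of_mono hm hYsc
      have hrel : Rel Y (mv Y p v) := ⟨⟨p, v, hpvq, hleg, rfl⟩, hnn, hsc'⟩
      refine ⟨mv Y p v, hsteps.tail hrel, ⟨hnn, hsc'⟩,
        fun i j => le_trans (hmono i j) (hm i j),
        fun i => lt_of_lt_of_le (hdY i) (hm i i), ?_⟩
      by_cases hap : a = p
      · subst hap
        rw [mv_apply_v, if_pos rfl]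
        have := hdY a; omega
      · rw [mv_apply_v, if_neg hap]
        have := hYn a v; omega

/-- Phase 3: all entries positive -/
theorem phase3 (X : Matrix V V ℤ) (hg : Good X) (hd : ∀ i, 0 < X i i) :
    ∃ Y, ReflTransGen Rel X Y ∧ Good Y ∧ ∀ i j : V, 0 < Y i j := by
  suffices h : ∀ s : Finset (V × V), ∃ Y, ReflTransGen Rel X Y ∧ Good Y ∧
      (∀ i, 0 < Y i i) ∧ ∀ q ∈ s, 0 < Y q.1 q.2 by
    obtain ⟨Y, h1, h2, _, h4⟩ := h Finset.univ
    exact ⟨Y, h1, h2, fun i j => h4 (i, j) (Finset.mem_univ _)⟩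
  intro s
  induction s using Finset.induction_on with
  | empty => exact ⟨X, .refl, hg, hd, by simp⟩
  | @insert q s hq ih =>
      obtain ⟨Y, hsteps, hgY, hdY, hps⟩ := ih
      obtain ⟨Z, hsteps', hgZ, hmono, hdZ, hZ⟩ :=
        phase3a Y hgY hdY q.1 q.2 (hgY.2 q.1 q.2)
      refine ⟨Z, hsteps.trans hsteps', hgZ, hdZ, ?_⟩
      intro r hr
      rcases Finset.mem_insert.mp hr with rfl | hr
      · exact hZ
      · exact lt_of_lt_of_le (hps r hr) (hmono r.1 r.2)

/-- Phase 4: pump diagonals to 2 -/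
theorem phase4 [Nontrivial V] (X : Matrix V V ℤ) (hg : Good X)
    (hall : ∀ i j : V, 0 < X i j) :
    ∃ Y, ReflTransGen Rel X Y ∧ (∀ i j : V, 0 < Y i j) ∧ ∀ i : V, 2 ≤ Y i i := by
  suffices h : ∀ s : Finset V, ∃ Y, ReflTransGen Rel X Y ∧ Good Y ∧
      (∀ i j : V, 0 < Y i j) ∧ ∀ v ∈ s, 2 ≤ Y v v by
    obtain ⟨Y, h1, _, h3, h4⟩ := h Finset.univ
    exact ⟨Y, h1, h3, fun i => h4 i (Finset.mem_univ i)⟩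
  intro s
  induction s using Finset.induction_on with
  | empty => exact ⟨X, .refl, hg, hall, by simp⟩
  | @insert v s hv ih =>
      obtain ⟨Y, hsteps, hgY, hallY, hds⟩ := ih
      obtain ⟨u, hu⟩ := exists_ne v
      obtain ⟨hYn, hYsc⟩ := hgY
      have hleg : 0 < Y u v ∨ 0 < Y u u := Or.inl (hallY u v)
      have hm := mv_mono hYn (u := u) (v := v) (by have := hallY u u; omega)
      have hnn : ∀ i j, 0 ≤ mv Y u v i j := fun i j => le_trans (hYn i j) (hm i j)
      have hsc' := sc_of_mono hm hYsc
      have hrel : Rel Y (mv Y u v) := ⟨⟨u, v, hu, hleg, rfl⟩, hnn, hsc'⟩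
      refine ⟨mv Y u v, hsteps.tail hrel, ⟨hnn, hsc'⟩,
        fun i j => lt_of_lt_of_le (hallY i j) (hm i j), ?_⟩
      intro x hx
      rcases Finset.mem_insert.mp hx with rfl | hx
      · rw [mv_apply_v, if_neg (Ne.symm hu)]
        have := hallY x x; have := hallY x u; omega
      · have h1 : mv Y u v x x = Y x x ∨ 2 ≤ mv Y u v x x := by
          by_cases hxv : x = v
          · exact absurd (hxv ▸ hx) hv
          · left; rw [mv_apply_ne _ _ _ hxv]
        rcases h1 with h1 | h1
        · rw [h1]; exact hds x hx
        · exact h1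

end Stmt14

open Stmt14 Relation in
/-- Let `A` be the adjacency matrix of a finite graph all of whose vertices lie
in one strongly connected component which is not a single cycle (some vertex
has out-degree at least `2`, equivalently supports two distinct return paths).
Then a finite sequence of legal column additions on `B = A - I` (adding column
`u` into column `v` when there is an edge from `u` to `v` or `u` supports a
loop), with every intermediate graph strongly connected with nonnegative
adjacency matrix, leads to a graph `A'` in which every vertex supports at
least two loops and every ordered pair of vertices is joined by an edge. -/
theorem stmt_14 (V : Type) [Fintype V] [DecidableEq V] [Nonempty V]
    (A : Matrix V V ℤ) (hpos : ∀ i j, 0 ≤ A i j)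
    (hsc : ∀ i j : V, Relation.TransGen (fun x y => 0 < A x y) i j)
    (hnotcycle : ∃ u : V, 2 ≤ ∑ j : V, A u j) :
    ∃ A' : Matrix V V ℤ,
      Relation.ReflTransGen
        (fun X Y =>
          (∃ u v : V, u ≠ v ∧ (0 < X u v ∨ 0 < X u u) ∧
            Y = Matrix.of fun x y =>
              if y = v then X x v + X x u - (if x = u then 1 else 0) else X x y) ∧
          (∀ i j, 0 ≤ Y i j) ∧
          (∀ i j : V, Relation.TransGen (fun x y => 0 < Y x y) i j))
        A A' ∧
      (∀ i : V, 2 ≤ A' i i) ∧ (∀ i j : V, 1 ≤ A' i j) := by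
  obtain ⟨u0, hu0⟩ := hnotcycle
  rcases subsingleton_or_nontrivial V with hsub | hnt
  · have hsum : (∑ j, A u0 j) = A u0 u0 :=
      Finset.sum_eq_single u0 (fun w _ hw => absurd (Subsingleton.elim w u0) hw) (by simp)
    refine ⟨A, .refl, ?_, ?_⟩
    · intro i
      have hi : i = u0 := Subsingleton.elim _ _
      rw [hi]; omega
    · intro i j
      have hi : i = u0 := Subsingleton.elim _ _
      have hj : j = u0 := Subsingleton.elim _ _
      rw [hi, hj]; omega
  · have hgood : Good A := ⟨hpos, hsc⟩
    obtain ⟨c0, hc0, hrt⟩ := transGen_head (hsc u0 u0)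
    obtain ⟨m, hm⟩ := reflTransGen_ch hrt
    obtain ⟨Y1, hs1, hg1, w, hw⟩ := phase1 m A u0 c0 hgood hu0 hc0 hm
    obtain ⟨Y2, hs2, hg2, hd2⟩ := phase2 Y1 w hg1 hw
    obtain ⟨Y3, hs3, hg3, hall3⟩ := phase3 Y2 hg2 hd2
    obtain ⟨Y4, hs4, hall4, hdiag4⟩ := phase4 Y3 hg3 hall3
    exact ⟨Y4, (hs1.trans hs2).trans (hs3.trans hs4), hdiag4,
      fun i j => by have := hall4 i j; omega⟩
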